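/- Let 0 < α < 1, A > 0 and k ≥ 1. Suppose E : [0,∞) → ℝ is continuous, positive, nonincreasing, continuously differentiable on (0,∞), with E(0) = 1, and for every t > 0 the integral (1/Γ(1−α)) ∫_0^t E'(s)(t−s)^{−α} ds converges absolutely and equals −A E(t)^k. Then for every ε ∈ (0, α/k) there exists a constant C_ε > 0 (depending only on α, k, A, ε) such that E(t) ≤ C_ε t^{−(α/k − ε)} for all t ≥ 1. -/

import Mathlib

open MeasureTheory Filter

lemma rpow_int_Ioc (α s m : ℝ) (hα1 : α < 1) (hsm : s < m) :
    ∫⁻ τ in Set.Ioc s m, ENNReal.ofReal ((τ - s) ^ (-α)) =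
      ENNReal.ofReal ((m - s) ^ (1 - α) / (1 - α)) := by
  have hint : IntegrableOn (fun τ => (τ - s) ^ (-α)) (Set.Ioc s m) := by
    have h1 : IntervalIntegrable (fun x : ℝ => x ^ (-α)) volume 0 (m - s) :=
      intervalIntegral.intervalIntegrable_rpow' (by linarith)
    have h2 := h1.comp_sub_right s
    rw [zero_add] at h2
    have h3 : m - s + s = m := by ring
    rw [h3] at h2
    exact (intervalIntegrable_iff_integrableOn_Ioc_of_le hsm.le).mp h2
  rw [← ofReal_integral_eq_lintegral_ofReal hint
    (ae_restrict_of_forall_mem measurableSet_Ioc fun τ hτ =>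
      Real.rpow_nonneg (by linarith [hτ.1]) _)]
  congr 1
  rw [← intervalIntegral.integral_of_le hsm.le]
  rw [show (fun τ : ℝ => (τ - s) ^ (-α)) = fun τ : ℝ => ((fun x : ℝ => x ^ (-α)) (τ - s)) from rfl]
  rw [intervalIntegral.integral_comp_sub_right (fun x : ℝ => x ^ (-α)) s]
  rw [sub_self]
  rw [integral_rpow (Or.inl (by linarith))]
  rw [Real.zero_rpow (by linarith : -α + 1 ≠ 0)]
  rw [show -α + 1 = 1 - α by ring]
  ring

lemma rpow_int_Ioo (α m t : ℝ) (hα0 : 0 < α) (hmt : m < t) :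
    ∫⁻ τ in Set.Ioo m t, ENNReal.ofReal ((t - τ) ^ (α - 1)) =
      ENNReal.ofReal ((t - m) ^ α / α) := by
  have hint : IntegrableOn (fun τ => (t - τ) ^ (α - 1)) (Set.Ioo m t) := by
    have h1 : IntervalIntegrable (fun x : ℝ => x ^ (α - 1)) volume 0 (t - m) :=
      intervalIntegral.intervalIntegrable_rpow' (by linarith)
    have h2 := h1.comp_sub_left t
    rw [sub_zero] at h2
    have h3 : t - (t - m) = m := by ring
    rw [h3] at h2
    exact ((intervalIntegrable_iff_integrableOn_Ioc_of_le hmt.le).mp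
      h2.symm).mono_set Set.Ioo_subset_Ioc_self
  rw [← ofReal_integral_eq_lintegral_ofReal hint
    (ae_restrict_of_forall_mem measurableSet_Ioo fun τ hτ =>
      Real.rpow_nonneg (by linarith [hτ.2]) _)]
  congr 1
  rw [← integral_Ioc_eq_integral_Ioo, ← intervalIntegral.integral_of_le hmt.le]
  rw [show (fun τ : ℝ => (t - τ) ^ (α - 1)) = fun τ : ℝ => ((fun x : ℝ => x ^ (α - 1)) (t - τ)) from rfl]
  rw [intervalIntegral.integral_comp_sub_left (fun x : ℝ => x ^ (α - 1)) t]
  rw [sub_self]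
  rw [integral_rpow (Or.inl (by linarith))]
  rw [Real.zero_rpow (by linarith : α - 1 + 1 ≠ 0)]
  rw [show α - 1 + 1 = α by ring]
  ring

lemma kernel_bound (α s t : ℝ) (hα0 : 0 < α) (hα1 : α < 1) (hst : s < t) :
    ∫⁻ τ in Set.Ioo s t, ENNReal.ofReal ((t - τ) ^ (α - 1) * (τ - s) ^ (-α)) ≤
      ENNReal.ofReal (1 / (1 - α) + 1 / α) := by
  set m := (s + t) / 2 with hm
  have hsm : s < m := by rw [hm]; linarith
  have hmt : m < t := by rw [hm]; linarith
  have hd1 : t - m = m - s := by rw [hm]; ring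
  have hd0 : (0:ℝ) < m - s := by linarith
  have hsplit : Set.Ioo s t = Set.Ioc s m ∪ Set.Ioo m t := by
    ext x
    simp only [Set.mem_Ioo, Set.mem_Ioc, Set.mem_union]
    constructor
    · rintro ⟨h1, h2⟩
      rcases le_or_gt x m with h | h
      · exact Or.inl ⟨h1, h⟩
      · exact Or.inr ⟨h, h2⟩
    · rintro (⟨h1, h2⟩ | ⟨h1, h2⟩) <;> constructor <;> linarith
  rw [hsplit]
  refine le_trans (lintegral_union_le _ _ _) ?_
  have part1 : ∫⁻ τ in Set.Ioc s m, ENNReal.ofReal ((t - τ) ^ (α - 1) * (τ - s) ^ (-α)) ≤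
      ENNReal.ofReal (1 / (1 - α)) := by
    have hmono : ∀ τ ∈ Set.Ioc s m, ENNReal.ofReal ((t - τ) ^ (α - 1) * (τ - s) ^ (-α)) ≤
        ENNReal.ofReal ((m - s) ^ (α - 1)) * ENNReal.ofReal ((τ - s) ^ (-α)) := by
      intro τ hτ
      rw [← ENNReal.ofReal_mul (Real.rpow_nonneg (by linarith) _)]
      apply ENNReal.ofReal_le_ofReal
      apply mul_le_mul_of_nonneg_right _ (Real.rpow_nonneg (by linarith [hτ.1]) _)
      rw [← hd1]
      exact Real.rpow_le_rpow_of_nonpos (by linarith) (by linarith [hτ.2]) (by linarith)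
    calc ∫⁻ τ in Set.Ioc s m, ENNReal.ofReal ((t - τ) ^ (α - 1) * (τ - s) ^ (-α))
        ≤ ∫⁻ τ in Set.Ioc s m, ENNReal.ofReal ((m - s) ^ (α - 1)) * ENNReal.ofReal ((τ - s) ^ (-α)) :=
          setLIntegral_mono (by fun_prop) hmono
      _ = ENNReal.ofReal ((m - s) ^ (α - 1)) * ∫⁻ τ in Set.Ioc s m, ENNReal.ofReal ((τ - s) ^ (-α)) :=
          lintegral_const_mul _ (by fun_prop)
      _ = ENNReal.ofReal ((m - s) ^ (α - 1)) * ENNReal.ofReal ((m - s) ^ (1 - α) / (1 - α)) := by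
          rw [rpow_int_Ioc α s m hα1 hsm]
      _ = ENNReal.ofReal (1 / (1 - α)) := by
          rw [← ENNReal.ofReal_mul (Real.rpow_nonneg hd0.le _)]
          congr 1
          rw [div_eq_mul_inv, ← mul_assoc, ← Real.rpow_add hd0]
          rw [show α - 1 + (1 - α) = 0 by ring, Real.rpow_zero, one_mul, one_div]
  have part2 : ∫⁻ τ in Set.Ioo m t, ENNReal.ofReal ((t - τ) ^ (α - 1) * (τ - s) ^ (-α)) ≤
      ENNReal.ofReal (1 / α) := by
    have hmono : ∀ τ ∈ Set.Ioo m t, ENNReal.ofReal ((t - τ) ^ (α - 1) * (τ - s) ^ (-α)) ≤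
        ENNReal.ofReal ((m - s) ^ (-α)) * ENNReal.ofReal ((t - τ) ^ (α - 1)) := by
      intro τ hτ
      rw [← ENNReal.ofReal_mul (Real.rpow_nonneg hd0.le _)]
      apply ENNReal.ofReal_le_ofReal
      rw [mul_comm ((m - s) ^ (-α)) _]
      apply mul_le_mul_of_nonneg_left _ (Real.rpow_nonneg (by linarith [hτ.2]) _)
      exact Real.rpow_le_rpow_of_nonpos hd0 (by linarith [hτ.1]) (by linarith)
    calc ∫⁻ τ in Set.Ioo m t, ENNReal.ofReal ((t - τ) ^ (α - 1) * (τ - s) ^ (-α))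
        ≤ ∫⁻ τ in Set.Ioo m t, ENNReal.ofReal ((m - s) ^ (-α)) * ENNReal.ofReal ((t - τ) ^ (α - 1)) :=
          setLIntegral_mono (by fun_prop) hmono
      _ = ENNReal.ofReal ((m - s) ^ (-α)) * ∫⁻ τ in Set.Ioo m t, ENNReal.ofReal ((t - τ) ^ (α - 1)) :=
          lintegral_const_mul _ (by fun_prop)
      _ = ENNReal.ofReal ((m - s) ^ (-α)) * ENNReal.ofReal ((t - m) ^ α / α) := by
          rw [rpow_int_Ioo α m t hα0 hmt]
      _ = ENNReal.ofReal (1 / α) := by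
          rw [← ENNReal.ofReal_mul (Real.rpow_nonneg hd0.le _)]
          congr 1
          rw [hd1, div_eq_mul_inv, ← mul_assoc, ← Real.rpow_add hd0]
          rw [show -α + α = 0 by ring, Real.rpow_zero, one_mul, one_div]
  calc (∫⁻ τ in Set.Ioc s m, ENNReal.ofReal ((t - τ) ^ (α - 1) * (τ - s) ^ (-α))) +
        ∫⁻ τ in Set.Ioo m t, ENNReal.ofReal ((t - τ) ^ (α - 1) * (τ - s) ^ (-α))
      ≤ ENNReal.ofReal (1 / (1 - α)) + ENNReal.ofReal (1 / α) := add_le_add part1 part2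
    _ = ENNReal.ofReal (1 / (1 - α) + 1 / α) := by
        rw [← ENNReal.ofReal_add (le_of_lt (div_pos one_pos (by linarith))) (le_of_lt (div_pos one_pos hα0))]

/-- If `E` is a continuous, positive, nonincreasing solution on `[0,∞)` of
`∂_t^α E = -A E^k` (classical Caputo derivative, absolutely convergent integral), `E(0)=1`,
then for every `ε ∈ (0, α/k)` there is `C_ε > 0` with `E t ≤ C_ε t^{-(α/k - ε)}` for all
`t ≥ 1`. -/
theorem stmt_9 (α A k : ℝ) (hα0 : 0 < α) (hα1 : α < 1) (hA : 0 < A) (hk : 1 ≤ k)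
    (E : ℝ → ℝ)
    (hcont : ContinuousOn E (Set.Ici 0))
    (hpos : ∀ t : ℝ, 0 ≤ t → 0 < E t)
    (hmono : AntitoneOn E (Set.Ici 0))
    (hdiff : ContDiffOn ℝ 1 E (Set.Ioi 0))
    (hE0 : E 0 = 1)
    (hODE : ∀ t : ℝ, 0 < t →
      MeasureTheory.IntegrableOn (fun s => deriv E s * (t - s) ^ (-α)) (Set.Ioc 0 t)
        MeasureTheory.volume ∧
      (1 / Real.Gamma (1 - α)) * (∫ s in (0:ℝ)..t, deriv E s * (t - s) ^ (-α))
        = -(A * E t ^ k)) :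
    ∀ ε : ℝ, 0 < ε → ε < α / k →
      ∃ Cε : ℝ, 0 < Cε ∧ ∀ t : ℝ, 1 ≤ t → E t ≤ Cε * t ^ (-(α / k - ε)) := by
  intro ε hε0 hεk
  have hk0 : (0:ℝ) < k := by linarith
  set Γ : ℝ := Real.Gamma (1 - α) with hΓdef
  have hΓ : 0 < Γ := Real.Gamma_pos_of_pos (by linarith)
  set c : ℝ := 1 / (1 - α) + 1 / α with hc
  have hcpos : 0 < c := by
    rw [hc]
    have h1 := div_pos one_pos (show (0:ℝ) < 1 - α by linarith)
    have h2 := div_pos one_pos hα0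
    linarith
  set C : ℝ := (c / (Γ * A)) ^ (1 / k) with hC
  have hCpos : 0 < C := Real.rpow_pos_of_pos (div_pos hcpos (by positivity)) _
  -- derivative is nonpositive on (0, ∞)
  have hderiv0 : ∀ s : ℝ, 0 < s → deriv E s ≤ 0 := by
    intro s hs
    have hda : HasDerivAt E (deriv E s) s :=
      ((hdiff.contDiffAt (isOpen_Ioi.mem_nhds hs)).differentiableAt one_ne_zero).hasDerivAt
    have h1 : Tendsto (slope E s) (nhdsWithin s (Set.Ioi s)) (nhds (deriv E s)) :=
      (hasDerivAt_iff_tendsto_slope.mp hda).mono_left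
        (nhdsWithin_mono s fun x hx => ne_of_gt hx)
    refine le_of_tendsto h1 ?_
    filter_upwards [self_mem_nhdsWithin] with x hx
    have hx' : s < x := hx
    rw [slope_def_field]
    apply div_nonpos_of_nonpos_of_nonneg _ (by linarith)
    have := hmono (Set.mem_Ici.mpr hs.le) (Set.mem_Ici.mpr (by linarith : (0:ℝ) ≤ x)) hx'.le
    linarith
  -- the equation in set-integral form
  have hEq : ∀ τ : ℝ, 0 < τ →
      ∫ s in Set.Ioo 0 τ, -deriv E s * (τ - s) ^ (-α) = Γ * (A * E τ ^ k) := by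
    intro τ hτ
    obtain ⟨hi, he⟩ := hODE τ hτ
    have hΓ' : Γ ≠ 0 := ne_of_gt hΓ
    have h2 : Γ * (1 / Γ * ∫ s in (0:ℝ)..τ, deriv E s * (τ - s) ^ (-α)) =
        Γ * -(A * E τ ^ k) := by rw [he]
    rw [← mul_assoc, mul_one_div, div_self hΓ', one_mul] at h2
    calc ∫ s in Set.Ioo 0 τ, -deriv E s * (τ - s) ^ (-α)
        = -∫ s in Set.Ioo 0 τ, deriv E s * (τ - s) ^ (-α) := by
          rw [← integral_neg]; congr 1; funext s; ring
      _ = -∫ s in Set.Ioc 0 τ, deriv E s * (τ - s) ^ (-α) := by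
          rw [integral_Ioc_eq_integral_Ioo]
      _ = -∫ s in (0:ℝ)..τ, deriv E s * (τ - s) ^ (-α) := by
          rw [intervalIntegral.integral_of_le hτ.le]
      _ = Γ * (A * E τ ^ k) := by rw [h2]; ring
  -- main decay bound
  have main : ∀ t : ℝ, 0 < t → Γ * (A * E t ^ k) * t ^ α ≤ c := by
    intro t ht
    obtain ⟨hInt, -⟩ := hODE t ht
    have hIntD : IntegrableOn (deriv E) (Set.Ioc 0 t) := by
      apply Integrable.mono' (hInt.norm.const_mul (t ^ α))
        (measurable_deriv E).aestronglyMeasurable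
      have hne : ∀ᵐ s ∂(volume.restrict (Set.Ioc 0 t)), s ≠ t := by
        refine Filter.Eventually.filter_mono (ae_mono Measure.restrict_le_self) ?_
        rw [ae_iff]
        simpa using measure_singleton t
      filter_upwards [ae_restrict_mem measurableSet_Ioc, hne] with s hs hsne
      have hst : s < t := lt_of_le_of_ne hs.2 hsne
      have hts : (0:ℝ) < t - s := by linarith
      have h1 : (1:ℝ) ≤ t ^ α * (t - s) ^ (-α) := by
        have h2 : (t - s) ^ α * (t - s) ^ (-α) ≤ t ^ α * (t - s) ^ (-α) :=
          mul_le_mul_of_nonneg_right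
            (Real.rpow_le_rpow hts.le (by linarith [hs.1]) hα0.le)
            (Real.rpow_nonneg hts.le _)
        rw [← Real.rpow_add hts, show α + -α = 0 by ring, Real.rpow_zero] at h2
        exact h2
      rw [norm_mul, Real.norm_of_nonneg (Real.rpow_nonneg hts.le _)]
      calc ‖deriv E s‖ = ‖deriv E s‖ * 1 := (mul_one _).symm
        _ ≤ ‖deriv E s‖ * (t ^ α * (t - s) ^ (-α)) :=
            mul_le_mul_of_nonneg_left h1 (norm_nonneg _)
        _ = t ^ α * (‖deriv E s‖ * (t - s) ^ (-α)) := by ring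
    -- FTC
    have hFTC : ∫ s in (0:ℝ)..t, deriv E s = E t - 1 := by
      rw [← hE0]
      apply intervalIntegral.integral_eq_sub_of_hasDeriv_right_of_le ht.le
        (hcont.mono (fun x hx => hx.1))
      · intro x hx
        exact (((hdiff.contDiffAt (isOpen_Ioi.mem_nhds hx.1)).differentiableAt
          one_ne_zero).hasDerivAt).hasDerivWithinAt
      · exact (intervalIntegrable_iff_integrableOn_Ioc_of_le ht.le).mpr hIntD
    -- the double-integral function
    set S : Set (ℝ × ℝ) := {q : ℝ × ℝ | 0 < q.2 ∧ q.2 < q.1 ∧ q.1 < t} with hSdef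
    have hSm : MeasurableSet S := by
      have h1 : S = {q : ℝ × ℝ | 0 < q.2} ∩ ({q | q.2 < q.1} ∩ {q | q.1 < t}) := by
        ext q; simp [hSdef, Set.mem_setOf_eq, and_assoc]
      rw [h1]
      exact (measurableSet_lt measurable_const measurable_snd).inter
        ((measurableSet_lt measurable_snd measurable_fst).inter
          (measurableSet_lt measurable_fst measurable_const))
    set G : ℝ × ℝ → ENNReal := S.indicator
      (fun q => ENNReal.ofReal (-deriv E q.2 * ((t - q.1) ^ (α - 1) * (q.1 - q.2) ^ (-α))))
      with hGdef
    have hGm : Measurable G := Measurable.indicator (by fun_prop) hSm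
    have hswap : ∫⁻ τ, ∫⁻ s, G (τ, s) = ∫⁻ s, ∫⁻ τ, G (τ, s) :=
      lintegral_lintegral_swap (f := fun τ s => G (τ, s)) hGm.aemeasurable
    have hτside : ∫⁻ τ, ∫⁻ s, G (τ, s) =
        ∫⁻ τ in Set.Ioo 0 t,
          ENNReal.ofReal ((t - τ) ^ (α - 1)) * ENNReal.ofReal (Γ * (A * E τ ^ k)) := by
      rw [← lintegral_indicator measurableSet_Ioo]
      congr 1
      funext τ
      by_cases hτ : τ ∈ Set.Ioo 0 t
      · rw [Set.indicator_of_mem hτ]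
        have hset : (fun s => G (τ, s)) = (Set.Ioo 0 τ).indicator
            (fun s => ENNReal.ofReal (-deriv E s * ((t - τ) ^ (α - 1) * (τ - s) ^ (-α)))) := by
          funext s
          by_cases h : s ∈ Set.Ioo 0 τ
          · rw [Set.indicator_of_mem h]
            exact Set.indicator_of_mem (show (τ, s) ∈ S from ⟨h.1, h.2, hτ.2⟩) _
          · rw [Set.indicator_of_notMem h]
            exact Set.indicator_of_notMem (fun hq => h ⟨hq.1, hq.2.1⟩) _
        rw [hset, lintegral_indicator measurableSet_Ioo]
        have hcongr : ∀ᵐ s ∂volume, s ∈ Set.Ioo 0 τ →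
            ENNReal.ofReal (-deriv E s * ((t - τ) ^ (α - 1) * (τ - s) ^ (-α))) =
            ENNReal.ofReal ((t - τ) ^ (α - 1)) * ENNReal.ofReal (-deriv E s * (τ - s) ^ (-α)) := by
          apply ae_of_all
          intro s hs
          rw [← ENNReal.ofReal_mul (Real.rpow_nonneg (by linarith [hτ.2] : (0:ℝ) ≤ t - τ) _)]
          congr 1
          ring
        rw [setLIntegral_congr_fun_ae measurableSet_Ioo hcongr,
          lintegral_const_mul _ (by fun_prop)]
        congr 1
        have hint : IntegrableOn (fun s => -deriv E s * (τ - s) ^ (-α)) (Set.Ioo 0 τ) := by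
          have h := ((hODE τ hτ.1).1.mono_set Set.Ioo_subset_Ioc_self).neg
          exact h.congr (Filter.Eventually.of_forall fun s => by simp [neg_mul])
        rw [← ofReal_integral_eq_lintegral_ofReal hint
          (ae_restrict_of_forall_mem measurableSet_Ioo fun s hs =>
            mul_nonneg (neg_nonneg.mpr (hderiv0 s hs.1))
              (Real.rpow_nonneg (by linarith [hs.2] : (0:ℝ) ≤ τ - s) _)),
          hEq τ hτ.1]
      · rw [Set.indicator_of_notMem hτ]
        have hz : ∀ s, G (τ, s) = 0 := by
          intro s
          apply Set.indicator_of_notMem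
          intro hq
          exact hτ ⟨lt_trans hq.1 hq.2.1, hq.2.2⟩
        simp [hz]
    have hLB : ENNReal.ofReal (Γ * (A * E t ^ k) * t ^ α) ≤
        ∫⁻ τ in Set.Ioo 0 t,
          ENNReal.ofReal ((t - τ) ^ (α - 1)) * ENNReal.ofReal (Γ * (A * E τ ^ k)) := by
      have hstep : ∀ τ ∈ Set.Ioo (0:ℝ) t,
          ENNReal.ofReal (t ^ (α - 1) * (Γ * (A * E t ^ k))) ≤
          ENNReal.ofReal ((t - τ) ^ (α - 1)) * ENNReal.ofReal (Γ * (A * E τ ^ k)) := by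
        intro τ hτ
        rw [← ENNReal.ofReal_mul (Real.rpow_nonneg (by linarith [hτ.2] : (0:ℝ) ≤ t - τ) _)]
        apply ENNReal.ofReal_le_ofReal
        have hEk : E t ^ k ≤ E τ ^ k :=
          Real.rpow_le_rpow (hpos t ht.le).le
            (hmono (Set.mem_Ici.mpr hτ.1.le) (Set.mem_Ici.mpr ht.le) hτ.2.le) hk0.le
        apply mul_le_mul
        · exact Real.rpow_le_rpow_of_nonpos (by linarith [hτ.2]) (by linarith [hτ.1]) (by linarith)
        · exact mul_le_mul_of_nonneg_left (mul_le_mul_of_nonneg_left hEk hA.le) hΓ.le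
        · exact mul_nonneg hΓ.le (mul_nonneg hA.le (Real.rpow_nonneg (hpos t ht.le).le _))
        · exact Real.rpow_nonneg (by linarith [hτ.2]) _
      calc ENNReal.ofReal (Γ * (A * E t ^ k) * t ^ α)
          = ENNReal.ofReal (t ^ (α - 1) * (Γ * (A * E t ^ k))) * volume (Set.Ioo (0:ℝ) t) := by
            rw [Real.volume_Ioo, sub_zero, ← ENNReal.ofReal_mul
              (mul_nonneg (Real.rpow_nonneg ht.le _)
                (mul_nonneg hΓ.le (mul_nonneg hA.le (Real.rpow_nonneg (hpos t ht.le).le _))))]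
            congr 1
            have h2 : t ^ (α - 1) * t = t ^ α := by
              rw [← Real.rpow_add_one (ne_of_gt ht)]
              congr 1
              ring
            linear_combination (-(Γ * (A * E t ^ k))) * h2
        _ = ∫⁻ _ in Set.Ioo (0:ℝ) t,
              ENNReal.ofReal (t ^ (α - 1) * (Γ * (A * E t ^ k))) :=
            (setLIntegral_const _ _).symm
        _ ≤ ∫⁻ τ in Set.Ioo 0 t,
              ENNReal.ofReal ((t - τ) ^ (α - 1)) * ENNReal.ofReal (Γ * (A * E τ ^ k)) :=
            setLIntegral_mono' measurableSet_Ioo hstep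
    have hσside : ∫⁻ s, ∫⁻ τ, G (τ, s) ≤ ENNReal.ofReal c := by
      have hzero : ∀ s, s ∉ Set.Ioo (0:ℝ) t → ∫⁻ τ, G (τ, s) = 0 := by
        intro s hs
        have hz : ∀ τ, G (τ, s) = 0 := by
          intro τ
          apply Set.indicator_of_notMem
          intro hq
          exact hs ⟨hq.1, lt_trans hq.2.1 hq.2.2⟩
        simp [hz]
      have hinner : ∀ s ∈ Set.Ioo (0:ℝ) t, ∫⁻ τ, G (τ, s) ≤
          ENNReal.ofReal (-deriv E s) * ENNReal.ofReal c := by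
        intro s hs
        have hset : (fun τ => G (τ, s)) = (Set.Ioo s t).indicator
            (fun τ => ENNReal.ofReal (-deriv E s * ((t - τ) ^ (α - 1) * (τ - s) ^ (-α)))) := by
          funext τ
          by_cases h : τ ∈ Set.Ioo s t
          · rw [Set.indicator_of_mem h]
            exact Set.indicator_of_mem (show (τ, s) ∈ S from ⟨hs.1, h.1, h.2⟩) _
          · rw [Set.indicator_of_notMem h]
            exact Set.indicator_of_notMem (fun hq => h ⟨hq.2.1, hq.2.2⟩) _
        rw [hset, lintegral_indicator measurableSet_Ioo]
        have hcongr : ∀ᵐ τ ∂volume, τ ∈ Set.Ioo s t →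
            ENNReal.ofReal (-deriv E s * ((t - τ) ^ (α - 1) * (τ - s) ^ (-α))) =
            ENNReal.ofReal (-deriv E s) * ENNReal.ofReal ((t - τ) ^ (α - 1) * (τ - s) ^ (-α)) := by
          apply ae_of_all
          intro τ hτ
          rw [← ENNReal.ofReal_mul (neg_nonneg.mpr (hderiv0 s hs.1))]
        rw [setLIntegral_congr_fun_ae measurableSet_Ioo hcongr,
          lintegral_const_mul _ (by fun_prop)]
        exact mul_le_mul_right (kernel_bound α s t hα0 hα1 hs.2) _
      have hrepr : (fun s => ∫⁻ τ, G (τ, s)) =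
          (Set.Ioo (0:ℝ) t).indicator (fun s => ∫⁻ τ, G (τ, s)) := by
        funext s
        by_cases h : s ∈ Set.Ioo (0:ℝ) t
        · rw [Set.indicator_of_mem h]
        · rw [Set.indicator_of_notMem h, hzero s h]
      calc ∫⁻ s, ∫⁻ τ, G (τ, s)
          = ∫⁻ s in Set.Ioo (0:ℝ) t, ∫⁻ τ, G (τ, s) := by
            conv_lhs => rw [hrepr]
            exact lintegral_indicator measurableSet_Ioo _
        _ ≤ ∫⁻ s in Set.Ioo (0:ℝ) t, ENNReal.ofReal (-deriv E s) * ENNReal.ofReal c :=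
            setLIntegral_mono' measurableSet_Ioo hinner
        _ = (∫⁻ s in Set.Ioo (0:ℝ) t, ENNReal.ofReal (-deriv E s)) * ENNReal.ofReal c :=
            lintegral_mul_const _ (by fun_prop)
        _ = ENNReal.ofReal (1 - E t) * ENNReal.ofReal c := by
            have hintneg : IntegrableOn (fun s => -deriv E s) (Set.Ioo 0 t) :=
              (hIntD.mono_set Set.Ioo_subset_Ioc_self).neg
            rw [← ofReal_integral_eq_lintegral_ofReal hintneg
              (ae_restrict_of_forall_mem measurableSet_Ioo fun s hs =>
                neg_nonneg.mpr (hderiv0 s hs.1))]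
            congr 1
            rw [integral_neg, ← integral_Ioc_eq_integral_Ioo,
              ← intervalIntegral.integral_of_le ht.le, hFTC]
            ring
        _ ≤ 1 * ENNReal.ofReal c := by
            apply mul_le_mul_left
            calc ENNReal.ofReal (1 - E t) ≤ ENNReal.ofReal 1 :=
                ENNReal.ofReal_le_ofReal (by linarith [hpos t ht.le])
              _ = 1 := ENNReal.ofReal_one
        _ = ENNReal.ofReal c := one_mul _
    have hfinal : ENNReal.ofReal (Γ * (A * E t ^ k) * t ^ α) ≤ ENNReal.ofReal c := by
      calc ENNReal.ofReal (Γ * (A * E t ^ k) * t ^ α)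
          ≤ ∫⁻ τ in Set.Ioo 0 t,
              ENNReal.ofReal ((t - τ) ^ (α - 1)) * ENNReal.ofReal (Γ * (A * E τ ^ k)) := hLB
        _ = ∫⁻ τ, ∫⁻ s, G (τ, s) := hτside.symm
        _ = ∫⁻ s, ∫⁻ τ, G (τ, s) := hswap
        _ ≤ ENNReal.ofReal c := hσside
    exact (ENNReal.ofReal_le_ofReal_iff hcpos.le).mp hfinal
  -- conclusion
  refine ⟨C, hCpos, ?_⟩
  intro t ht1
  have ht0 : (0:ℝ) < t := lt_of_lt_of_le one_pos ht1
  have h1 := main t ht0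
  have hEt : (0:ℝ) < E t := hpos t ht0.le
  have h2 : E t ^ k ≤ c / (Γ * A) * t ^ (-α) := by
    have key : E t ^ k * (Γ * A * t ^ α) ≤ c := by
      calc E t ^ k * (Γ * A * t ^ α) = Γ * (A * E t ^ k) * t ^ α := by ring
        _ ≤ c := h1
    have htα : (0:ℝ) < t ^ α := Real.rpow_pos_of_pos ht0 _
    have heq : c / (Γ * A) * t ^ (-α) = c / (Γ * A * t ^ α) := by
      rw [Real.rpow_neg ht0.le]
      field_simp
    rw [heq, le_div_iff₀ (by positivity)]
    linarith [key]
  have hEtk : (E t ^ k) ^ (1 / k) = E t := by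
    rw [← Real.rpow_mul hEt.le, mul_one_div, div_self (ne_of_gt hk0), Real.rpow_one]
  have h3 : E t ≤ (c / (Γ * A) * t ^ (-α)) ^ (1 / k) := by
    rw [← hEtk]
    exact Real.rpow_le_rpow (Real.rpow_nonneg hEt.le _) h2 (by positivity)
  have h4 : (c / (Γ * A) * t ^ (-α)) ^ (1 / k) = C * t ^ (-(α / k)) := by
    rw [Real.mul_rpow (by positivity) (Real.rpow_nonneg ht0.le _)]
    congr 1
    rw [← Real.rpow_mul ht0.le]
    congr 1
    ring
  calc E t ≤ C * t ^ (-(α / k)) := h4 ▸ h3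
    _ ≤ C * t ^ (-(α / k - ε)) := by
        apply mul_le_mul_of_nonneg_left _ hCpos.le
        exact Real.rpow_le_rpow_of_exponent_le ht1 (by linarith)
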